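/- Let d and p be positive integers with p ≥ 2, let τ : {1, …, p} → {1, …, p} be a fixed-point-free map (τ(i) ≠ i for all i), and let α₁, …, α_p ∈ [0, d/2). Then the Lebesgue integral over (ℝ^d)^p of the function (x₁, …, x_p) ↦ ∏_{i=1}^p ⟨x_i⟩^{-(d+1)} · ∏_{i=1}^p |x_i − x_{τ(i)}|^{-α_i} (defined off the set where some x_i = x_{τ(i)}, which has measure zero) is finite. -/

import Mathlib

open MeasureTheory

/-- The "inhomogeneous norm" (Japanese bracket) `⟨y⟩ = (1 + |y|²)^{1/2}`. -/
noncomputable def jb {n : ℕ} (y : EuclideanSpace ℝ (Fin n)) : ℝ :=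
  (1 + ‖y‖ ^ 2) ^ ((1 : ℝ) / 2)

namespace Stmt7Aux

open Finset Metric ENNReal Module Function

abbrev Euc (d : ℕ) : Type := EuclideanSpace ℝ (Fin d)

noncomputable def W (d : ℕ) (t : Euc d) : ℝ≥0∞ :=
  ENNReal.ofReal (jb t ^ (-((d : ℝ) + 1)))

lemma one_le_jb {d : ℕ} (t : Euc d) : 1 ≤ jb t := by
  have : (1:ℝ) ≤ 1 + ‖t‖ ^ 2 := le_add_of_nonneg_right (by positivity)
  simpa [jb] using Real.one_le_rpow this (by norm_num)

lemma measurable_W {d : ℕ} : Measurable (W d) := by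
  unfold W jb
  fun_prop

lemma W_le_one {d : ℕ} (t : Euc d) : W d t ≤ 1 := by
  rw [W, ← ENNReal.ofReal_one]
  exact ENNReal.ofReal_le_ofReal <|
    Real.rpow_le_one_of_one_le_of_nonpos (one_le_jb t) (neg_nonpos.mpr (by positivity))

lemma lintegral_W_lt_top {d : ℕ} : ∫⁻ t, W d t < ⊤ := by
  have h : ∀ t : Euc d, jb t ^ (-((d : ℝ) + 1)) = (1 + ‖t‖ ^ 2) ^ (-((d:ℝ)+1) / 2) := by
    intro t
    rw [jb, ← Real.rpow_natCast ‖t‖ 2, ← Real.rpow_mul (by positivity)]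
    ring_nf
  simp_rw [W, h]
  have hnr : (finrank ℝ (Euc d) : ℝ) < (d : ℝ) + 1 := by
    rw [finrank_euclideanSpace_fin]; linarith
  exact (integrable_rpow_neg_one_add_norm_sq hnr).lintegral_lt_top




lemma euc_nontrivial {d : ℕ} (hd : 0 < d) : Nontrivial (Euc d) := by
  have : Nonempty (Fin d) := ⟨⟨0, hd⟩⟩
  exact nontrivial_of_ne (EuclideanSpace.single ⟨0, hd⟩ (1:ℝ)) 0 (by
    intro h
    have := congrArg (fun v : Euc d => v ⟨0, hd⟩) h
    simp [EuclideanSpace.single_apply] at this)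

lemma lintegral_ball_rpow {d : ℕ} (hd : 0 < d) {Γ : ℝ} (h0 : 0 ≤ Γ) (hΓ : Γ < d) :
    ∫⁻ t in ball (0 : Euc d) 1, ENNReal.ofReal (‖t‖ ^ (-Γ)) < ⊤ := by
  haveI := euc_nontrivial hd
  rcases h0.eq_or_lt with h0 | h0
  · subst h0
    simp only [neg_zero, Real.rpow_zero, ENNReal.ofReal_one]
    rw [setLIntegral_const]
    exact ENNReal.mul_lt_top ENNReal.one_lt_top measure_ball_lt_top
  · set ρ : ℝ := 1/2 with hρ
    have hρ0 : 0 < ρ := by norm_num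
    have hρ1 : ρ < 1 := by norm_num
    set f : Euc d → ℝ≥0∞ := fun t => ENNReal.ofReal (‖t‖ ^ (-Γ)) with hf
    set shell : ℕ → Set (Euc d) := fun k => ball (0:Euc d) (ρ^k) \ ball 0 (ρ^(k+1)) with hshell
    have hsub : ball (0:Euc d) 1 ⊆ {0} ∪ ⋃ k, shell k := by
      intro t ht
      rcases eq_or_ne t 0 with rfl | htne
      · exact Set.mem_union_left _ rfl
      · have hnorm : 0 < ‖t‖ := norm_pos_iff.mpr htne
        have hlt1 : ‖t‖ < 1 := by simpa [mem_ball_zero_iff] using ht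
        have hex : ∃ n, ρ ^ n ≤ ‖t‖ := by
          obtain ⟨n, hn⟩ := exists_pow_lt_of_lt_one hnorm hρ1
          exact ⟨n, hn.le⟩
        set m := Nat.find hex with hm
        have hm1 : ρ ^ m ≤ ‖t‖ := Nat.find_spec hex
        have hmpos : 0 < m := by
          rcases Nat.eq_zero_or_pos m with h | h
          · exfalso; rw [h] at hm1; simp at hm1; linarith
          · exact h
        refine Set.mem_union_right _ (Set.mem_iUnion.mpr ⟨m - 1, ?_⟩)
        constructor
        · rw [mem_ball_zero_iff]
          have := Nat.find_min hex (m := m - 1) (by omega)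
          push_neg at this
          exact this
        · have hmm : m - 1 + 1 = m := by omega
          simp only [hmm, Set.mem_setOf_eq, mem_ball_zero_iff, not_lt]
          exact hm1
    have hshell_meas : ∀ k, MeasurableSet (shell k) :=
      fun k => measurableSet_ball.diff measurableSet_ball
    set V : ℝ≥0∞ := volume (ball (0:Euc d) 1) with hV
    have hVlt : V < ⊤ := measure_ball_lt_top
    have key : ∀ k : ℕ, ∫⁻ t in shell k, f t ≤
        ENNReal.ofReal (ρ ^ (-Γ)) * ENNReal.ofReal ((ρ ^ ((d:ℝ) - Γ))) ^ k * V := by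
      intro k
      have hbound : ∀ t ∈ shell k, f t ≤ ENNReal.ofReal ((ρ^(k+1)) ^ (-Γ)) := by
        intro t ht
        apply ENNReal.ofReal_le_ofReal
        exact Real.rpow_le_rpow_of_nonpos (pow_pos hρ0 _)
          (by simpa [dist_zero_right] using ht.2) (neg_nonpos.mpr h0.le)
      calc ∫⁻ t in shell k, f t
          ≤ ∫⁻ _ in shell k, ENNReal.ofReal ((ρ^(k+1)) ^ (-Γ)) :=
            setLIntegral_mono measurable_const hbound
        _ = ENNReal.ofReal ((ρ^(k+1)) ^ (-Γ)) * volume (shell k) := setLIntegral_const _ _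
        _ ≤ ENNReal.ofReal ((ρ^(k+1)) ^ (-Γ)) * volume (ball (0:Euc d) (ρ^k)) :=
            mul_le_mul_right (measure_mono Set.diff_subset) _
        _ = ENNReal.ofReal ((ρ^(k+1)) ^ (-Γ)) * (ENNReal.ofReal ((ρ^k) ^ finrank ℝ (Euc d)) * V) := by
            rw [Measure.addHaar_ball volume 0 (by positivity)]
        _ ≤ ENNReal.ofReal (ρ ^ (-Γ)) * ENNReal.ofReal ((ρ ^ ((d:ℝ) - Γ))) ^ k * V := by
            rw [finrank_euclideanSpace_fin, ← ENNReal.ofReal_pow (by positivity), ← mul_assoc,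
              ← ENNReal.ofReal_mul (by positivity), ← ENNReal.ofReal_mul (by positivity)]
            apply mul_le_mul_left
            apply ENNReal.ofReal_le_ofReal
            apply le_of_eq
            rw [← Real.rpow_natCast ρ (k+1), ← Real.rpow_natCast ρ k,
              ← Real.rpow_mul hρ0.le, ← Real.rpow_natCast (ρ ^ ((d:ℝ) - Γ)) k,
              ← Real.rpow_mul hρ0.le, ← Real.rpow_natCast (ρ ^ (k:ℝ)) d,
              ← Real.rpow_mul hρ0.le, ← Real.rpow_add hρ0, ← Real.rpow_add hρ0]
            congr 1
            push_cast
            ring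
    have hsum : ∫⁻ t in ball (0:Euc d) 1, f t ≤
        0 + ∑' k, (ENNReal.ofReal (ρ ^ (-Γ)) * ENNReal.ofReal ((ρ ^ ((d:ℝ) - Γ))) ^ k * V) := by
      calc ∫⁻ t in ball (0:Euc d) 1, f t ≤ ∫⁻ t in {0} ∪ ⋃ k, shell k, f t :=
            lintegral_mono_set hsub
        _ ≤ (∫⁻ t in {(0:Euc d)}, f t) + ∫⁻ t in ⋃ k, shell k, f t := lintegral_union_le _ _ _
        _ ≤ 0 + ∑' k, ∫⁻ t in shell k, f t := by
            gcongr
            · rw [lintegral_singleton]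
              simp [hf, Real.zero_rpow (neg_ne_zero.mpr h0.ne')]
            · exact lintegral_iUnion_le _ _
        _ ≤ _ := by gcongr; exact key _
    rw [zero_add] at hsum
    refine hsum.trans_lt ?_
    have ha : ENNReal.ofReal ((ρ ^ ((d:ℝ) - Γ))) < 1 := by
      rw [← ENNReal.ofReal_one]
      exact ENNReal.ofReal_lt_ofReal_iff_of_nonneg (by positivity) |>.mpr
        (Real.rpow_lt_one hρ0.le hρ1 (by linarith))
    have := ENNReal.tsum_geometric (ENNReal.ofReal ((ρ ^ ((d:ℝ) - Γ))))
    calc ∑' k, (ENNReal.ofReal (ρ ^ (-Γ)) * ENNReal.ofReal ((ρ ^ ((d:ℝ) - Γ))) ^ k * V)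
        = ENNReal.ofReal (ρ ^ (-Γ)) * (∑' k, ENNReal.ofReal ((ρ ^ ((d:ℝ) - Γ))) ^ k) * V := by
          rw [ENNReal.tsum_mul_right, ENNReal.tsum_mul_left]
      _ < ⊤ := by
          rw [this]
          refine ENNReal.mul_lt_top (ENNReal.mul_lt_top ENNReal.ofReal_lt_top ?_) hVlt
          rw [ENNReal.inv_lt_top]
          exact tsub_pos_of_lt ha






lemma kernel_bound {d : ℕ} (hd : 0 < d) {Γ : ℝ} (h0 : 0 ≤ Γ) (hΓ : Γ < d) :
    ∃ C : ℝ≥0∞, C < ⊤ ∧ ∀ y : Euc d, ∫⁻ t, W d t * ENNReal.ofReal (‖t - y‖ ^ (-Γ)) ≤ C := by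
  set I := ∫⁻ t in ball (0:Euc d) 1, ENNReal.ofReal (‖t‖ ^ (-Γ)) with hI
  refine ⟨I + ∫⁻ t, W d t,
    ENNReal.add_lt_top.mpr ⟨lintegral_ball_rpow hd h0 hΓ, lintegral_W_lt_top⟩, fun y => ?_⟩
  set g : Euc d → ℝ≥0∞ :=
    fun s => Set.indicator (ball (0:Euc d) 1) (fun s => ENNReal.ofReal (‖s‖ ^ (-Γ))) s with hg
  have hgmeas : Measurable g := by
    apply Measurable.indicator ?_ measurableSet_ball
    fun_prop
  have hpt : ∀ t, W d t * ENNReal.ofReal (‖t - y‖ ^ (-Γ)) ≤ g (t - y) + W d t := by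
    intro t
    by_cases h : t - y ∈ ball (0:Euc d) 1
    · refine le_trans ?_ le_self_add
      simp only [hg]
      rw [Set.indicator_of_mem h]
      calc W d t * ENNReal.ofReal (‖t - y‖ ^ (-Γ))
          ≤ 1 * ENNReal.ofReal (‖t - y‖ ^ (-Γ)) := mul_le_mul_left (W_le_one t) _
        _ = ENNReal.ofReal (‖t - y‖ ^ (-Γ)) := one_mul _
    · refine le_trans ?_ le_add_self
      have h1 : ‖t - y‖ ^ (-Γ) ≤ 1 :=
        Real.rpow_le_one_of_one_le_of_nonpos
          (by simpa [mem_ball_zero_iff, not_lt] using h) (neg_nonpos.mpr h0)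
      calc W d t * ENNReal.ofReal (‖t - y‖ ^ (-Γ))
          ≤ W d t * 1 := mul_le_mul_right (ENNReal.ofReal_le_one.mpr h1) _
        _ = W d t := mul_one _
  calc ∫⁻ t, W d t * ENNReal.ofReal (‖t - y‖ ^ (-Γ))
      ≤ ∫⁻ t, (g (t - y) + W d t) := lintegral_mono hpt
    _ = (∫⁻ t, g (t - y)) + ∫⁻ t, W d t :=
        lintegral_add_left (hgmeas.comp (measurable_id.sub measurable_const)) _
    _ = I + ∫⁻ t, W d t := by
        rw [lintegral_sub_right_eq_self g y, hg, lintegral_indicator measurableSet_ball]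

lemma multi_kernel_bound {d : ℕ} (hd : 0 < d) {ι : Type*} (s : Finset ι) (β : ι → ℝ)
    (hβ0 : ∀ e ∈ s, 0 ≤ β e) (hsum : ∑ e ∈ s, β e < d) :
    ∃ C : ℝ≥0∞, C < ⊤ ∧ ∀ y : ι → Euc d,
      ∫⁻ t, W d t * ∏ e ∈ s, ENNReal.ofReal (‖t - y e‖ ^ (-β e)) ≤ C := by
  set Γ := ∑ e ∈ s, β e with hΓdef
  have hΓ0 : 0 ≤ Γ := Finset.sum_nonneg hβ0
  rcases hΓ0.eq_or_lt with hz | hpos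
  · have hall : ∀ e ∈ s, β e = 0 := (Finset.sum_eq_zero_iff_of_nonneg hβ0).mp hz.symm
    refine ⟨∫⁻ t, W d t, lintegral_W_lt_top, fun y => ?_⟩
    have hone : ∀ t : Euc d, ∏ e ∈ s, ENNReal.ofReal (‖t - y e‖ ^ (-β e)) = 1 := by
      intro t
      rw [Finset.prod_eq_one]
      intro e he
      rw [hall e he]
      simp
    simp only [hone, mul_one]
    exact le_rfl
  · obtain ⟨C, hC, hCb⟩ := kernel_bound hd hΓ0 hsum
    refine ⟨C, hC, fun y => ?_⟩
    have hpt : ∀ t : Euc d, (∏ e ∈ s, ENNReal.ofReal (‖t - y e‖ ^ (-β e))) ≤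
        ∑ e ∈ s, ENNReal.ofReal (β e / Γ) * ENNReal.ofReal (‖t - y e‖ ^ (-Γ)) := by
      intro t
      rw [← ENNReal.ofReal_prod_of_nonneg (fun e _ => Real.rpow_nonneg (norm_nonneg _) _)]
      have hreal : (∏ e ∈ s, ‖t - y e‖ ^ (-β e)) ≤
          ∑ e ∈ s, (β e / Γ) * (‖t - y e‖ ^ (-Γ)) := by
        have heq : ∀ e ∈ s, ‖t - y e‖ ^ (-β e) = (‖t - y e‖ ^ (-Γ)) ^ (β e / Γ) := by
          intro e he
          rw [← Real.rpow_mul (norm_nonneg _)]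
          congr 1
          field_simp
        rw [Finset.prod_congr rfl heq]
        exact Real.geom_mean_le_arith_mean_weighted s (fun e => β e / Γ)
          (fun e => ‖t - y e‖ ^ (-Γ)) (fun e he => div_nonneg (hβ0 e he) hΓ0)
          (by rw [← Finset.sum_div, ← hΓdef, div_self hpos.ne'])
          (fun e he => Real.rpow_nonneg (norm_nonneg _) _)
      calc ENNReal.ofReal (∏ e ∈ s, ‖t - y e‖ ^ (-β e))
          ≤ ENNReal.ofReal (∑ e ∈ s, (β e / Γ) * (‖t - y e‖ ^ (-Γ))) :=
            ENNReal.ofReal_le_ofReal hreal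
        _ = ∑ e ∈ s, ENNReal.ofReal ((β e / Γ) * (‖t - y e‖ ^ (-Γ))) :=
            ENNReal.ofReal_sum_of_nonneg fun e he =>
              mul_nonneg (div_nonneg (hβ0 e he) hΓ0) (Real.rpow_nonneg (norm_nonneg _) _)
        _ = ∑ e ∈ s, ENNReal.ofReal (β e / Γ) * ENNReal.ofReal (‖t - y e‖ ^ (-Γ)) := by
            refine Finset.sum_congr rfl fun e he => ?_
            rw [ENNReal.ofReal_mul (div_nonneg (hβ0 e he) hΓ0)]
    calc ∫⁻ t, W d t * ∏ e ∈ s, ENNReal.ofReal (‖t - y e‖ ^ (-β e))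
        ≤ ∫⁻ t, ∑ e ∈ s, ENNReal.ofReal (β e / Γ) *
            (W d t * ENNReal.ofReal (‖t - y e‖ ^ (-Γ))) := by
          apply lintegral_mono
          intro t
          refine le_trans (mul_le_mul_right (hpt t) _) (le_of_eq ?_)
          rw [Finset.mul_sum]
          refine Finset.sum_congr rfl fun e he => ?_
          ring
      _ = ∑ e ∈ s, ENNReal.ofReal (β e / Γ) *
            ∫⁻ t, W d t * ENNReal.ofReal (‖t - y e‖ ^ (-Γ)) := by
          rw [lintegral_finset_sum]
          · refine Finset.sum_congr rfl fun e he => ?_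
            rw [lintegral_const_mul']
            exact ENNReal.ofReal_ne_top
          · intro e he
            apply Measurable.const_mul
            apply measurable_W.mul
            fun_prop
      _ ≤ ∑ e ∈ s, ENNReal.ofReal (β e / Γ) * C := by
          gcongr
          exact hCb _
      _ = ENNReal.ofReal (∑ e ∈ s, β e / Γ) * C := by
          rw [ENNReal.ofReal_sum_of_nonneg fun e he => div_nonneg (hβ0 e he) hΓ0,
            Finset.sum_mul]
      _ = C := by
          rw [← Finset.sum_div, ← hΓdef, div_self hpos.ne', ENNReal.ofReal_one, one_mul]






lemma exists_good_vertex {p : ℕ} (τ : Fin p → Fin p) (hτ : ∀ i, τ i ≠ i) (α : Fin p → ℝ)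
    {d : ℕ} (hd : 0 < d) (hα0 : ∀ i, 0 ≤ α i) (hα : ∀ i, α i < (d:ℝ)/2)
    {S : Finset (Fin p)} (hS : S.Nonempty) :
    ∃ j ∈ S, ∑ i ∈ (S.filter fun i => τ i ∈ S).filter (fun i => i = j ∨ τ i = j), α i < d := by
  have hd' : (0:ℝ) < d := by exact_mod_cast hd
  by_cases hcase : ∃ j ∈ S, ∀ i ∈ S, τ i ≠ j
  · obtain ⟨j, hjS, hj⟩ := hcase
    refine ⟨j, hjS, ?_⟩
    have hsub : (S.filter fun i => τ i ∈ S).filter (fun i => i = j ∨ τ i = j) ⊆ {j} := by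
      intro i hi
      simp only [Finset.mem_filter] at hi
      rcases hi.2 with rfl | h
      · exact Finset.mem_singleton_self _
      · exact absurd h (hj i hi.1.1)
    calc ∑ i ∈ (S.filter fun i => τ i ∈ S).filter (fun i => i = j ∨ τ i = j), α i
        ≤ ∑ i ∈ {j}, α i :=
          Finset.sum_le_sum_of_subset_of_nonneg hsub (fun i _ _ => hα0 i)
      _ = α j := Finset.sum_singleton _ _
      _ < (d:ℝ) := by have := hα j; linarith
  · push_neg at hcase
    have himg : S ⊆ S.image τ := by
      intro j hj
      obtain ⟨i, hiS, hij⟩ := hcase j hj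
      exact Finset.mem_image.mpr ⟨i, hiS, hij⟩
    have hcard : (S.image τ).card = S.card :=
      le_antisymm Finset.card_image_le (Finset.card_le_card himg)
    have hinj : Set.InjOn τ S := Finset.injOn_of_card_image_eq hcard
    obtain ⟨j, hjS⟩ := hS
    obtain ⟨i₀, hi₀S, hi₀⟩ := hcase j hjS
    have hij : i₀ ≠ j := by
      intro h
      subst h
      exact hτ i₀ hi₀
    refine ⟨j, hjS, ?_⟩
    have hsub : (S.filter fun i => τ i ∈ S).filter (fun i => i = j ∨ τ i = j) ⊆ {j, i₀} := by
      intro i hi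
      simp only [Finset.mem_filter] at hi
      rcases hi.2 with rfl | h
      · exact Finset.mem_insert_self _ _
      · have : i = i₀ := hinj hi.1.1 hi₀S (h.trans hi₀.symm)
        subst this
        exact Finset.mem_insert_of_mem (Finset.mem_singleton_self _)
    calc ∑ i ∈ (S.filter fun i => τ i ∈ S).filter (fun i => i = j ∨ τ i = j), α i
        ≤ ∑ i ∈ ({j, i₀} : Finset (Fin p)), α i :=
          Finset.sum_le_sum_of_subset_of_nonneg hsub (fun i _ _ => hα0 i)
      _ = α j + α i₀ := Finset.sum_pair hij.symm
      _ < (d:ℝ) := by have := hα j; have := hα i₀; linarith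

noncomputable def F (d p : ℕ) (τ : Fin p → Fin p) (α : Fin p → ℝ) (S : Finset (Fin p))
    (x : Fin p → Euc d) : ℝ≥0∞ :=
  (∏ i ∈ S, W d (x i)) *
    ∏ i ∈ S.filter (fun i => τ i ∈ S), ENNReal.ofReal (‖x i - x (τ i)‖ ^ (-(α i)))

lemma measurable_F (d p : ℕ) (τ : Fin p → Fin p) (α : Fin p → ℝ) (S : Finset (Fin p)) :
    Measurable (F d p τ α S) := by
  apply Measurable.mul
  · exact Finset.measurable_prod _ fun i _ => measurable_W.comp (measurable_pi_apply i)
  · refine Finset.measurable_prod _ fun i _ => ?_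
    fun_prop

lemma F_ne_top (d p : ℕ) (τ : Fin p → Fin p) (α : Fin p → ℝ) (S : Finset (Fin p))
    (x : Fin p → Euc d) : F d p τ α S x ≠ ⊤ := by
  apply ENNReal.mul_ne_top
  · exact (ENNReal.prod_lt_top fun i _ => ENNReal.ofReal_lt_top).ne
  · exact (ENNReal.prod_lt_top fun i _ => ENNReal.ofReal_lt_top).ne

lemma lmarginal_const_mul'' {δ : Type*} [DecidableEq δ] {π : δ → Type*}
    [∀ i, MeasurableSpace (π i)] (μ : ∀ i, Measure (π i)) (s : Finset δ)
    {c : ℝ≥0∞} (hc : c ≠ ⊤) (f : (∀ i, π i) → ℝ≥0∞) (x : ∀ i, π i) :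
    (∫⋯∫⁻_s, (fun x => c * f x) ∂μ) x = c * (∫⋯∫⁻_s, f ∂μ) x := by
  simp only [lmarginal]
  exact lintegral_const_mul' c _ hc

lemma main_bound {d p : ℕ} (hd : 0 < d) (τ : Fin p → Fin p) (hτ : ∀ i, τ i ≠ i)
    (α : Fin p → ℝ) (hα0 : ∀ i, 0 ≤ α i) (hα : ∀ i, α i < (d:ℝ)/2) :
    ∀ S : Finset (Fin p), ∃ C : ℝ≥0∞, C < ⊤ ∧
      ∀ x, (∫⋯∫⁻_S, F d p τ α S ∂(fun _ => (volume : Measure (Euc d)))) x ≤ C := by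
  intro S
  induction S using Finset.strongInduction with
  | _ S ih =>
  rcases Finset.eq_empty_or_nonempty S with rfl | hS
  · refine ⟨1, ENNReal.one_lt_top, fun x => ?_⟩
    rw [lmarginal_empty]
    simp [F]
  · obtain ⟨j, hjS, hsum⟩ := exists_good_vertex τ hτ α hd hα0 hα hS
    set S' := S.erase j with hS'
    obtain ⟨C', hC', hIH⟩ := ih S' (Finset.erase_ssubset hjS)
    set T := (S.filter fun i => τ i ∈ S).filter (fun i => i = j ∨ τ i = j) with hT
    obtain ⟨Cj, hCj, hb⟩ := multi_kernel_bound hd T α (fun e _ => hα0 e) hsum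
    refine ⟨Cj * C', ENNReal.mul_lt_top hCj hC', fun x => ?_⟩
    have key : ∀ (x : Fin p → Euc d) (t : Euc d),
        F d p τ α S (update x j t) =
          (W d t * ∏ e ∈ T,
            ENNReal.ofReal (‖t - (if e = j then x (τ j) else x e)‖ ^ (-(α e)))) *
            F d p τ α S' x := by
      intro x t
      rw [F, F]
      have hW : ∏ i ∈ S, W d (update x j t i) = W d t * ∏ i ∈ S', W d (x i) := by
        rw [← Finset.mul_prod_erase S _ hjS, update_self]
        congr 1
        exact Finset.prod_congr rfl fun i hi =>
          congrArg (W d) (update_of_ne (Finset.mem_erase.mp hi).1 _ _)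
      have hsplitprod :
          (∏ i ∈ S.filter (fun i => τ i ∈ S),
            ENNReal.ofReal (‖update x j t i - update x j t (τ i)‖ ^ (-(α i)))) =
          (∏ e ∈ T,
            ENNReal.ofReal (‖t - (if e = j then x (τ j) else x e)‖ ^ (-(α e)))) *
          ∏ i ∈ S'.filter (fun i => τ i ∈ S'),
            ENNReal.ofReal (‖x i - x (τ i)‖ ^ (-(α i))) := by
        rw [← Finset.prod_filter_mul_prod_filter_not (S.filter (fun i => τ i ∈ S))
          (fun i => i = j ∨ τ i = j)]
        congr 1
        · refine Finset.prod_congr rfl fun i hi => ?_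
          simp only [hT, Finset.mem_filter] at hi
          by_cases hij : i = j
          · subst hij
            rw [update_self, update_of_ne (hτ i), if_pos rfl]
          · have hτij : τ i = j := hi.2.resolve_left hij
            rw [update_of_ne hij, hτij, update_self, if_neg hij, norm_sub_rev]
        · have hE : (S.filter (fun i => τ i ∈ S)).filter (fun i => ¬(i = j ∨ τ i = j)) =
              S'.filter (fun i => τ i ∈ S') := by
            ext i
            simp only [Finset.mem_filter, Finset.mem_erase, hS', not_or]
            tauto
          rw [hE]
          refine Finset.prod_congr rfl fun i hi => ?_
          simp only [Finset.mem_filter, Finset.mem_erase, hS'] at hi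
          rw [update_of_ne hi.1.1, update_of_ne hi.2.1]
      rw [hW, hsplitprod]
      ring
    calc (∫⋯∫⁻_S, F d p τ α S ∂(fun _ => (volume : Measure (Euc d)))) x
        = (∫⋯∫⁻_S', (fun x => ∫⁻ t, F d p τ α S (update x j t))
            ∂(fun _ => (volume : Measure (Euc d)))) x := by
          rw [lmarginal_erase' _ (measurable_F d p τ α S) hjS]
      _ ≤ (∫⋯∫⁻_S', (fun x => Cj * F d p τ α S' x)
            ∂(fun _ => (volume : Measure (Euc d)))) x := by
          refine lmarginal_mono (fun x' => ?_) x
          have heq : ∫⁻ t, F d p τ α S (update x' j t)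
              = (∫⁻ t, W d t * ∏ e ∈ T,
                  ENNReal.ofReal (‖t - (if e = j then x' (τ j) else x' e)‖ ^ (-(α e)))) *
                F d p τ α S' x' := by
            simp_rw [key x']
            exact lintegral_mul_const' _ _ (F_ne_top d p τ α S' x')
          rw [heq]
          exact mul_le_mul_left (hb _) _
      _ = Cj * (∫⋯∫⁻_S', F d p τ α S' ∂(fun _ => (volume : Measure (Euc d)))) x :=
          lmarginal_const_mul'' _ _ hCj.ne _ x
      _ ≤ Cj * C' := mul_le_mul_right (hIH x) _


end Stmt7Aux

/-- For `p ≥ 2`, a fixed-point-free map `τ` on `{1,…,p}` and exponents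
`α₁, …, α_p ∈ [0, d/2)`, the Lebesgue integral over `(ℝ^d)^p` of
`∏ᵢ ⟨xᵢ⟩^{-(d+1)} · ∏ᵢ |xᵢ − x_{τ(i)}|^{-αᵢ}` is finite. -/
theorem stmt7 (d p : ℕ) (hd : 0 < d) (hp : 2 ≤ p)
    (τ : Fin p → Fin p) (hτ : ∀ i, τ i ≠ i)
    (α : Fin p → ℝ) (hα0 : ∀ i, 0 ≤ α i) (hα : ∀ i, α i < (d : ℝ) / 2) :
    (∫⁻ x : Fin p → EuclideanSpace ℝ (Fin d),
      ENNReal.ofReal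
        ((∏ i, jb (x i) ^ (-((d : ℝ) + 1))) * ∏ i, ‖x i - x (τ i)‖ ^ (-(α i)))) < ⊤ := by
  obtain ⟨C, hC, hb⟩ := Stmt7Aux.main_bound hd τ hτ α hα0 hα Finset.univ
  have heq : ∀ x : Fin p → EuclideanSpace ℝ (Fin d),
      ENNReal.ofReal
        ((∏ i, jb (x i) ^ (-((d : ℝ) + 1))) * ∏ i, ‖x i - x (τ i)‖ ^ (-(α i))) =
      Stmt7Aux.F d p τ α Finset.univ x := by
    intro x
    have h1 : (0:ℝ) ≤ ∏ i, jb (x i) ^ (-((d : ℝ) + 1)) :=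
      Finset.prod_nonneg fun i _ => Real.rpow_nonneg
        (Real.rpow_nonneg (by positivity) _) _
    have h2 : ∀ i ∈ Finset.univ, (0:ℝ) ≤ jb (x i) ^ (-((d : ℝ) + 1)) :=
      fun i _ => Real.rpow_nonneg (Real.rpow_nonneg (by positivity) _) _
    have h3 : ∀ i ∈ Finset.univ, (0:ℝ) ≤ ‖x i - x (τ i)‖ ^ (-(α i)) :=
      fun i _ => Real.rpow_nonneg (norm_nonneg _) _
    rw [ENNReal.ofReal_mul h1, ENNReal.ofReal_prod_of_nonneg h2,
      ENNReal.ofReal_prod_of_nonneg h3, Stmt7Aux.F]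
    congr 1
    rw [Finset.filter_true_of_mem (fun i _ => Finset.mem_univ _)]
  simp_rw [heq]
  calc (∫⁻ x : Fin p → EuclideanSpace ℝ (Fin d), Stmt7Aux.F d p τ α Finset.univ x)
      = (MeasureTheory.lmarginal (fun _ => (volume : Measure (Stmt7Aux.Euc d))) Finset.univ
          (Stmt7Aux.F d p τ α Finset.univ)) (fun _ => 0) := by
        rw [← MeasureTheory.lintegral_eq_lmarginal_univ, MeasureTheory.volume_pi]
    _ ≤ C := hb _
    _ < ⊤ := hC
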